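/- Let A be any matrix with zero row sums and zero column sums, and let v ∈ ℂ^N with Av = κv and Aᵀv = κ̃v for some κ, κ̃ ∈ ℂ. Let λ₁, λ₂ be the complex roots of z² + βκκ̃ z + α²κκ̃, and for j ∈ {1,2} define w_j = (κv, λ_j v)ᵀ ∈ ℂ^{2N}. Then B w_j = λ_j w_j for j ∈ {1,2}, where B = [[0, A], [−α²Aᵀ, −βAᵀA]]. -/
import Mathlib


theorem B_eigenvectors_from_A (N : ℕ) (α β : ℝ)
    (A : Matrix (Fin N) (Fin N) ℂ)
    (hrow : ∀ n : Fin N, ∑ m, A n m = 0)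
    (hcol : ∀ m : Fin N, ∑ n, A n m = 0)
    (v : Fin N → ℂ) (κ κt : ℂ)
    (hv : A.mulVec v = κ • v)
    (hvt : A.transpose.mulVec v = κt • v)
    (B : Matrix (Fin N ⊕ Fin N) (Fin N ⊕ Fin N) ℂ)
    (hB : B = Matrix.fromBlocks 0 A (-((α : ℂ) ^ 2 • A.transpose))
      (-((β : ℂ) • (A.transpose * A))))
    (lam : Fin 2 → ℂ)
    (hlam : ∀ j, (lam j) ^ 2 + (β : ℂ) * κ * κt * lam j + (α : ℂ) ^ 2 * κ * κt = 0)
    (w : Fin 2 → (Fin N ⊕ Fin N) → ℂ)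
    (hw : ∀ j, w j = Sum.elim (κ • v) (lam j • v)) :
    ∀ j, B.mulVec (w j) = lam j • w j := by
  intro j
  rw [hB, hw j, Matrix.fromBlocks_mulVec]
  have h1 : A.mulVec (lam j • v) = lam j • (κ • v) := by
    rw [Matrix.mulVec_smul, hv, smul_comm]
  have h2 : A.transpose.mulVec (κ • v) = κ • (κt • v) := by
    rw [Matrix.mulVec_smul, hvt]
  have h3 : (A.transpose * A).mulVec (lam j • v) = lam j • (κ • (κt • v)) := by
    rw [Matrix.mulVec_smul, ← Matrix.mulVec_mulVec, hv, Matrix.mulVec_smul, hvt, smul_comm κ κt]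
  have key := hlam j
  rw [Sum.elim_comp_inl, Sum.elim_comp_inr]
  funext i
  cases i with
  | inl i =>
    simp only [h1, Matrix.zero_mulVec, Sum.elim_inl, zero_add, Pi.smul_apply, smul_eq_mul, mul_assoc]
  | inr i =>
    simp only [Matrix.neg_mulVec, Matrix.smul_mulVec, h2, h3, Sum.elim_inr,
      Pi.add_apply, Pi.neg_apply, Pi.smul_apply, smul_eq_mul]
    linear_combination (-(v i)) * hlam j
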